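/- Let A ∈ M₂(ℂ) and u, f, ξ ∈ ℂ with u ≠ 0. Let Γ = [[f/u + ξ, −u], [1/u, 0]] ∈ M₂(ℂ) and D = [[1,0],[0,0]] ∈ M₂(ℂ), and define B = D·Γ⁻¹ + Γ·A·Γ⁻¹. Then tr(B²) = tr(A²) − 2·A₁₂/u, where A₁₂ is the upper-right entry of A. -/

import Mathlib

open Matrix

set_option maxHeartbeats 1000000 in
/-- The gauge transformation B = DΓ⁻¹ + ΓAΓ⁻¹ with Γ = Γ₁(ξ,s) and
D = ∂Γ/∂ξ satisfies tr(B²) = tr(A²) − 2A₁₂/u. -/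
theorem trace_sq_gauge_transform
    (A : Matrix (Fin 2) (Fin 2) ℂ) (u f ξ : ℂ) (hu : u ≠ 0)
    (Γ D B : Matrix (Fin 2) (Fin 2) ℂ)
    (hΓ : Γ = !![f / u + ξ, -u; 1 / u, 0])
    (hD : D = !![1, 0; 0, 0])
    (hB : B = D * Γ⁻¹ + Γ * A * Γ⁻¹) :
    Matrix.trace (B * B) = Matrix.trace (A * A) - 2 * A 0 1 / u := by
  have hinv : Γ⁻¹ = !![0, u; -(1 / u), f / u + ξ] := by
    apply inv_eq_right_inv
    subst hΓ
    ext i j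
    fin_cases i <;> fin_cases j <;>
      simp [Matrix.mul_apply, Fin.sum_univ_two] <;> field_simp <;> ring
  subst hB hD hΓ
  rw [hinv]
  rw [show A = !![A 0 0, A 0 1; A 1 0, A 1 1] by ext i j; fin_cases i <;> fin_cases j <;> rfl]
  simp [Matrix.trace_fin_two, Matrix.mul_apply, Fin.sum_univ_two, Matrix.add_apply]
  field_simp
  ring_nf
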